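/- arXiv:math/0510071 — 2 statements merged into one kernel-verified Lean document; each statement's English description precedes it below -/
import Mathlib

section
/- Let U : L²(𝕋²) → L²(𝕋²) be a unitary operator that maps C^∞ functions to C^∞ functions and commutes with ∂/∂x₁ and ∂/∂x₂ on C^∞ functions. Let 0 < δ < 1, let ν be a C^∞ function on 𝕋² with |ν| ≤ δ everywhere, and let f be a C^∞ function on 𝕋². Then for every k ≥ 1 and r ∈ {1,2}, denoting by (U∘M_ν)^k f the k-fold application of u ↦ U(ν·u) to f, one has ‖∂/∂x_r ((U∘M_ν)^k f)‖_{L²} ≤ (δ + max|∂ν/∂x_r|)·k·δ^{k−1}·(‖f‖²_{L²} + ‖∂f/∂x₁‖²_{L²} + ‖∂f/∂x₂‖²_{L²})^{1/2}. -/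
open MeasureTheory

instance : Fact ((0:ℝ) < 2 * Real.pi) := ⟨by positivity⟩

/-- The two-torus `𝕋² = ℝ²/2πℤ²`. -/
abbrev T2 : Type := AddCircle (2 * Real.pi) × AddCircle (2 * Real.pi)

/-- The canonical projection `ℝ² → 𝕋²`. -/
noncomputable def projT2 : ℝ × ℝ → T2 := fun p => (↑p.1, ↑p.2)

lemma projT2_surjective : Function.Surjective projT2 := by
  rintro ⟨x, y⟩
  obtain ⟨a, ha⟩ := QuotientAddGroup.mk_surjective x
  obtain ⟨b, hb⟩ := QuotientAddGroup.mk_surjective y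
  exact ⟨(a, b), by simp [projT2, ha, hb]⟩

/-- A choice of lift `𝕋² → ℝ²` (a set-theoretic section of `projT2`). -/
noncomputable def liftT2 : T2 → ℝ × ℝ := Function.surjInv projT2_surjective

/-- A function on the torus is `C^∞` iff its (doubly periodic) lift to `ℝ²` is `C^∞`. -/
def SmoothT2 (F : T2 → ℂ) : Prop := ContDiff ℝ (⊤ : ℕ∞) (F ∘ projT2)

/-- The partial derivative `∂F/∂x₁` of a function on the torus. -/
noncomputable def pd1 (F : T2 → ℂ) : T2 → ℂ := fun q =>
  fderiv ℝ (F ∘ projT2) (liftT2 q) (1, 0)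

/-- The partial derivative `∂F/∂x₂` of a function on the torus. -/
noncomputable def pd2 (F : T2 → ℂ) : T2 → ℂ := fun q =>
  fderiv ℝ (F ∘ projT2) (liftT2 q) (0, 1)

/-- `∂_z = (1/2)(∂/∂x₁ − i ∂/∂x₂)` on the torus (`z = x₁ + i x₂`). -/
noncomputable def dzT2 (F : T2 → ℂ) : T2 → ℂ := fun q =>
  (pd1 F q - Complex.I * pd2 F q) / 2

/-- `∂_z̄ = (1/2)(∂/∂x₁ + i ∂/∂x₂)` on the torus (`z = x₁ + i x₂`). -/
noncomputable def dzbarT2 (F : T2 → ℂ) : T2 → ℂ := fun q =>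
  (pd1 F q + Complex.I * pd2 F q) / 2

/-- The character `e_n(x) = e^{i(n₁x₁+n₂x₂)}` on the torus, `n ∈ ℤ²`. -/
noncomputable def eT2 (n : ℤ × ℤ) : T2 → ℂ := fun q =>
  Complex.exp (Complex.I * ((n.1 : ℂ) * ((liftT2 q).1 : ℂ) + (n.2 : ℂ) * ((liftT2 q).2 : ℂ)))

/-- The complex `L²` space of the torus. -/
abbrev L2T2 : Type := Lp ℂ 2 (volume : Measure T2)

/-- The squared `L²` norm `∫ |g|²` of a function on the torus. -/
noncomputable def l2sq (g : T2 → ℂ) : ℝ := ∫ q : T2, ‖g q‖ ^ 2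

/-- The first Sobolev norm `(‖g‖² + ‖∂g/∂x₁‖² + ‖∂g/∂x₂‖²)^{1/2}`. -/
noncomputable def sob1 (g : T2 → ℂ) : ℝ :=
  Real.sqrt (l2sq g + l2sq (pd1 g) + l2sq (pd2 g))

/-- A unitary operator `U` on `L²(𝕋²)` "maps `C^∞` functions to `C^∞` functions and
commutes with `∂/∂x₁` and `∂/∂x₂` on them": for every smooth `φ` there is a smooth
`ψ` (representing `U φ`) such that `U` sends (the class of) `φ` to `ψ` and (the
class of) `∂φ/∂x_r` to `∂ψ/∂x_r` for `r = 1, 2`. -/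
def SmoothCompat (U : L2T2 ≃ₗᵢ[ℂ] L2T2) : Prop :=
  ∀ φ : T2 → ℂ, SmoothT2 φ → ∃ ψ : T2 → ℂ, SmoothT2 ψ ∧
    (∀ g : L2T2, ⇑g =ᵐ[volume] φ → ⇑(U g) =ᵐ[volume] ψ) ∧
    (∀ g : L2T2, ⇑g =ᵐ[volume] pd1 φ → ⇑(U g) =ᵐ[volume] pd1 ψ) ∧
    (∀ g : L2T2, ⇑g =ᵐ[volume] pd2 φ → ⇑(U g) =ᵐ[volume] pd2 ψ)

lemma isOpenQuotientMap_projT2 : IsOpenQuotientMap projT2 :=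
  (QuotientAddGroup.isOpenQuotientMap_mk).prodMap (QuotientAddGroup.isOpenQuotientMap_mk)

lemma proj_lift (q : T2) : projT2 (liftT2 q) = q := Function.surjInv_eq projT2_surjective q

lemma projT2_add (a b : ℝ × ℝ) : projT2 (a + b) = projT2 a + projT2 b := by
  simp [projT2, Prod.ext_iff]

lemma SmoothT2.continuous {F : T2 → ℂ} (hF : SmoothT2 F) : Continuous F := by
  exact (isOpenQuotientMap_projT2.isQuotientMap.continuous_iff).2 (ContDiff.continuous (hF : ContDiff ℝ (⊤ : ℕ∞) (F ∘ projT2)))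

lemma projT2_sub (a b : ℝ × ℝ) : projT2 (a - b) = projT2 a - projT2 b := by
  simp [projT2, Prod.ext_iff]

lemma fderiv_comp_add_const' (G : ℝ × ℝ → ℂ) (hG : Differentiable ℝ G) (c x : ℝ × ℝ) :
    fderiv ℝ (fun y => G (y + c)) x = fderiv ℝ G (x + c) := by
  have h1 : HasFDerivAt (fun y : ℝ × ℝ => y + c) (ContinuousLinearMap.id ℝ (ℝ × ℝ)) x :=
    (hasFDerivAt_id x).add_const c
  have h2 : HasFDerivAt G (fderiv ℝ G (x + c)) (x + c) := (hG (x + c)).hasFDerivAt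
  have := h2.comp x h1
  simpa [Function.comp_def] using this.fderiv

lemma fderiv_lift_eq {F : T2 → ℂ} (hF : SmoothT2 F) (x : ℝ × ℝ) :
    fderiv ℝ (F ∘ projT2) (liftT2 (projT2 x)) = fderiv ℝ (F ∘ projT2) x := by
  set G := F ∘ projT2 with hGdef
  set c := liftT2 (projT2 x) - x with hc
  have hpc : projT2 c = 0 := by
    rw [hc, projT2_sub, proj_lift, sub_self]
  have hper : (fun y => G (y + c)) = G := by
    funext y
    simp only [hGdef, Function.comp_apply, projT2_add, hpc, add_zero]
  have hdiff : Differentiable ℝ G := ContDiff.differentiable hF (by norm_num)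
  have := fderiv_comp_add_const' G hdiff c x
  rw [hper] at this
  have hx : x + c = liftT2 (projT2 x) := by rw [hc]; abel
  rw [← hx, ← this]

lemma pd1_comp_proj {F : T2 → ℂ} (hF : SmoothT2 F) :
    pd1 F ∘ projT2 = fun x => fderiv ℝ (F ∘ projT2) x (1, 0) := by
  funext x
  simp only [Function.comp_apply, pd1, fderiv_lift_eq hF]

lemma pd2_comp_proj {F : T2 → ℂ} (hF : SmoothT2 F) :
    pd2 F ∘ projT2 = fun x => fderiv ℝ (F ∘ projT2) x (0, 1) := by
  funext x
  simp only [Function.comp_apply, pd2, fderiv_lift_eq hF]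

lemma pd1_continuous {F : T2 → ℂ} (hF : SmoothT2 F) : Continuous (pd1 F) := by
  refine (isOpenQuotientMap_projT2.isQuotientMap.continuous_iff).2 ?_
  rw [pd1_comp_proj hF]
  exact (ContinuousLinearMap.apply ℝ ℂ ((1:ℝ), (0:ℝ))).continuous.comp
    (ContDiff.continuous_fderiv (hF : ContDiff ℝ (⊤ : ℕ∞) (F ∘ projT2)) (by norm_num))

lemma pd2_continuous {F : T2 → ℂ} (hF : SmoothT2 F) : Continuous (pd2 F) := by
  refine (isOpenQuotientMap_projT2.isQuotientMap.continuous_iff).2 ?_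
  rw [pd2_comp_proj hF]
  exact (ContinuousLinearMap.apply ℝ ℂ ((0:ℝ), (1:ℝ))).continuous.comp
    (ContDiff.continuous_fderiv (hF : ContDiff ℝ (⊤ : ℕ∞) (F ∘ projT2)) (by norm_num))

lemma SmoothT2.mul {φ ψ : T2 → ℂ} (hφ : SmoothT2 φ) (hψ : SmoothT2 ψ) :
    SmoothT2 (fun q => φ q * ψ q) :=
  ContDiff.mul (hφ : ContDiff ℝ (⊤ : ℕ∞) (φ ∘ projT2)) (hψ : ContDiff ℝ (⊤ : ℕ∞) (ψ ∘ projT2))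

lemma pd1_mul {φ ψ : T2 → ℂ} (hφ : SmoothT2 φ) (hψ : SmoothT2 ψ) (q : T2) :
    pd1 (fun q => φ q * ψ q) q = pd1 φ q * ψ q + φ q * pd1 ψ q := by
  have hφ' : DifferentiableAt ℝ (φ ∘ projT2) (liftT2 q) :=
    (ContDiff.differentiable hφ (by norm_num)).differentiableAt
  have hψ' : DifferentiableAt ℝ (ψ ∘ projT2) (liftT2 q) :=
    (ContDiff.differentiable hψ (by norm_num)).differentiableAt
  have h : ((fun q => φ q * ψ q) ∘ projT2) = fun x => (φ ∘ projT2) x * (ψ ∘ projT2) x := rfl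
  show fderiv ℝ ((fun q => φ q * ψ q) ∘ projT2) (liftT2 q) (1, 0) = _
  rw [h, fderiv_fun_mul hφ' hψ']
  simp only [ContinuousLinearMap.add_apply, ContinuousLinearMap.smul_apply, smul_eq_mul,
    Function.comp_apply, proj_lift]
  show φ q * pd1 ψ q + ψ q * pd1 φ q = _
  ring

lemma pd2_mul {φ ψ : T2 → ℂ} (hφ : SmoothT2 φ) (hψ : SmoothT2 ψ) (q : T2) :
    pd2 (fun q => φ q * ψ q) q = pd2 φ q * ψ q + φ q * pd2 ψ q := by
  have hφ' : DifferentiableAt ℝ (φ ∘ projT2) (liftT2 q) :=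
    (ContDiff.differentiable hφ (by norm_num)).differentiableAt
  have hψ' : DifferentiableAt ℝ (ψ ∘ projT2) (liftT2 q) :=
    (ContDiff.differentiable hψ (by norm_num)).differentiableAt
  have h : ((fun q => φ q * ψ q) ∘ projT2) = fun x => (φ ∘ projT2) x * (ψ ∘ projT2) x := rfl
  show fderiv ℝ ((fun q => φ q * ψ q) ∘ projT2) (liftT2 q) (0, 1) = _
  rw [h, fderiv_fun_mul hφ' hψ']
  simp only [ContinuousLinearMap.add_apply, ContinuousLinearMap.smul_apply, smul_eq_mul,
    Function.comp_apply, proj_lift]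
  show φ q * pd2 ψ q + ψ q * pd2 φ q = _
  ring

lemma hcsT2 {E : Type*} [Zero E] [TopologicalSpace E] (f : T2 → E) : HasCompactSupport f :=
  IsCompact.of_isClosed_subset isCompact_univ (isClosed_tsupport f) (Set.subset_univ _)

lemma memL2 {f : T2 → ℂ} (hf : Continuous f) : MemLp f 2 (volume : Measure T2) :=
  hf.memLp_of_hasCompactSupport (hcsT2 f)

lemma l2sq_nonneg (f : T2 → ℂ) : 0 ≤ l2sq f :=
  integral_nonneg fun q => sq_nonneg _

lemma norm_L2_eq (g : L2T2) : ‖g‖ ^ 2 = ∫ q : T2, ‖g q‖ ^ 2 := by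
  rw [@norm_sq_eq_re_inner ℂ, MeasureTheory.L2.inner_def,
    ← integral_re (MeasureTheory.L2.integrable_inner g g)]
  refine integral_congr_ae (Filter.Eventually.of_forall fun q => ?_)
  show RCLike.re (inner ℂ (g q) (g q)) = ‖g q‖ ^ 2
  exact inner_self_eq_norm_sq _

lemma sqrt_l2sq_eq_norm (g : L2T2) {φ : T2 → ℂ} (h : ⇑g =ᵐ[volume] φ) :
    Real.sqrt (l2sq φ) = ‖g‖ := by
  have h1 : l2sq φ = ∫ q : T2, ‖g q‖ ^ 2 :=
    (integral_congr_ae (h.mono fun q hq => by rw [hq])).symm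
  rw [h1, ← norm_L2_eq g, Real.sqrt_sq (norm_nonneg g)]

lemma N_mono {φ ψ : T2 → ℂ} (hψ : Continuous ψ) {C : ℝ} (hC : 0 ≤ C)
    (h : ∀ q, ‖φ q‖ ≤ C * ‖ψ q‖) :
    Real.sqrt (l2sq φ) ≤ C * Real.sqrt (l2sq ψ) := by
  have hint : Integrable (fun q : T2 => C ^ 2 * ‖ψ q‖ ^ 2) volume :=
    Continuous.integrable_of_hasCompactSupport
      (continuous_const.mul ((hψ.norm).pow 2)) (hcsT2 _)
  have hle : l2sq φ ≤ C ^ 2 * l2sq ψ := by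
    rw [l2sq, l2sq, ← MeasureTheory.integral_const_mul]
    refine integral_mono_of_nonneg (Filter.Eventually.of_forall fun q => sq_nonneg _)
      hint (Filter.Eventually.of_forall fun q => ?_)
    calc ‖φ q‖ ^ 2 ≤ (C * ‖ψ q‖) ^ 2 := by
          apply pow_le_pow_left₀ (norm_nonneg _) (h q)
      _ = C ^ 2 * ‖ψ q‖ ^ 2 := by ring
  calc Real.sqrt (l2sq φ) ≤ Real.sqrt (C ^ 2 * l2sq ψ) := Real.sqrt_le_sqrt hle
    _ = C * Real.sqrt (l2sq ψ) := by
        rw [Real.sqrt_mul (sq_nonneg C), Real.sqrt_sq hC]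

lemma N_triangle {φ ψ : T2 → ℂ} (hφ : Continuous φ) (hψ : Continuous ψ) :
    Real.sqrt (l2sq (fun q => φ q + ψ q)) ≤ Real.sqrt (l2sq φ) + Real.sqrt (l2sq ψ) := by
  have hφm := memL2 hφ
  have hψm := memL2 hψ
  have hsum : ⇑(hφm.toLp φ + hψm.toLp ψ) =ᵐ[volume] fun q => φ q + ψ q :=
    (Lp.coeFn_add _ _).trans ((hφm.coeFn_toLp.add hψm.coeFn_toLp))
  rw [sqrt_l2sq_eq_norm _ hsum, sqrt_l2sq_eq_norm _ hφm.coeFn_toLp,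
    sqrt_l2sq_eq_norm _ hψm.coeFn_toLp]
  exact norm_add_le _ _

lemma geo_bound {δ S : ℝ} (hδ : 0 ≤ δ) (A : ℕ → ℝ)
    (hA0 : A 0 ≤ S) (hrec : ∀ k, A (k + 1) ≤ δ * A k) :
    ∀ k, A k ≤ δ ^ k * S := by
  intro k
  induction k with
  | zero => simpa using hA0
  | succ k ih =>
    calc A (k + 1) ≤ δ * A k := hrec k
      _ ≤ δ * (δ ^ k * S) := mul_le_mul_of_nonneg_left ih hδ
      _ = δ ^ (k + 1) * S := by ring

lemma rec_bound {δ M S : ℝ} (hδ : 0 < δ) (hM : 0 ≤ M) (hS : 0 ≤ S)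
    (A B : ℕ → ℝ) (hA : ∀ k, A k ≤ δ ^ k * S) (hB0 : B 0 ≤ S)
    (hrec : ∀ k, B (k + 1) ≤ M * A k + δ * B k) :
    ∀ k, 1 ≤ k → B k ≤ (δ + M) * k * δ ^ (k - 1) * S := by
  intro k hk
  induction k, hk using Nat.le_induction with
  | base =>
    have h1 := hrec 0
    have h2 : M * A 0 ≤ M * S :=
      mul_le_mul_of_nonneg_left (le_trans (hA 0) (by simpa using le_refl S)) hM
    have h3 : δ * B 0 ≤ δ * S := mul_le_mul_of_nonneg_left hB0 hδ.le
    have hA0S : A 0 ≤ S := by simpa using hA 0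
    simp only [Nat.cast_one, pow_zero, mul_one, Nat.sub_self]
    nlinarith [hA 0]
  | succ k hk ih =>
    have h1 := hrec k
    have h2 : M * A k ≤ M * (δ ^ k * S) := mul_le_mul_of_nonneg_left (hA k) hM
    have h3 : δ * B k ≤ δ * ((δ + M) * k * δ ^ (k - 1) * S) :=
      mul_le_mul_of_nonneg_left ih hδ.le
    have hδk : δ * δ ^ (k - 1) = δ ^ k := by
      rw [← pow_succ']
      congr 1
      omega
    have hpow : (0:ℝ) ≤ δ ^ k := pow_nonneg hδ.le k
    have hkk : (1:ℝ) ≤ (k:ℝ) := by exact_mod_cast hk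
    calc B (k + 1) ≤ M * A k + δ * B k := h1
      _ ≤ M * (δ ^ k * S) + δ * ((δ + M) * k * δ ^ (k - 1) * S) := add_le_add h2 h3
      _ = M * (δ ^ k * S) + (δ + M) * k * (δ * δ ^ (k - 1)) * S := by ring
      _ = (M + (δ + M) * k) * (δ ^ k * S) := by rw [hδk]; ring
      _ ≤ ((δ + M) + (δ + M) * k) * (δ ^ k * S) := by
          have : M ≤ δ + M := by linarith
          nlinarith [mul_nonneg hpow hS, mul_nonneg (mul_nonneg hδ.le hM) hpow]
      _ = (δ + M) * (↑(k + 1)) * δ ^ (k + 1 - 1) * S := by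
          have hred : k + 1 - 1 = k := rfl
          rw [hred]
          push_cast
          ring

/-- **Derivative bound for the iterates `(U∘M_ν)^k f` (estimate (2.9)).**
Let `U` be a unitary operator on `L²(𝕋²)` mapping `C^∞` functions to `C^∞`
functions and commuting with `∂/∂x₁`, `∂/∂x₂`, let `0 < δ < 1`, `ν` be `C^∞` with
`|ν| ≤ δ`, and `f` be `C^∞`. If `u k` are smooth representatives of the iterates
`(U ∘ M_ν)^k f` (`u 0 = f`, `u (k+1) = U(ν · u k)`), then for every `k ≥ 1` and
`r ∈ {1,2}`,
`‖∂/∂x_r (u k)‖_{L²} ≤ (δ + max|∂ν/∂x_r|) · k · δ^{k−1} · ‖f‖_{H¹}`. -/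
theorem iterate_derivative_bound
    (U : L2T2 ≃ₗᵢ[ℂ] L2T2) (hU : SmoothCompat U)
    (δ : ℝ) (hδ0 : 0 < δ) (hδ1 : δ < 1)
    (ν : T2 → ℂ) (hν : SmoothT2 ν) (hνb : ∀ q : T2, ‖ν q‖ ≤ δ)
    (f : T2 → ℂ) (hf : SmoothT2 f)
    (u : ℕ → T2 → ℂ) (hu0 : u 0 = f) (husmooth : ∀ k, SmoothT2 (u k))
    (hiter : ∀ k : ℕ, ∀ g : L2T2, ⇑g =ᵐ[volume] (fun q => ν q * u k q) →
      ⇑(U g) =ᵐ[volume] u (k + 1)) :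
    ∀ k : ℕ, 1 ≤ k →
      Real.sqrt (l2sq (pd1 (u k))) ≤
        (δ + ⨆ q : T2, ‖pd1 ν q‖) * k * δ ^ (k - 1) * sob1 f ∧
      Real.sqrt (l2sq (pd2 (u k))) ≤
        (δ + ⨆ q : T2, ‖pd2 ν q‖) * k * δ ^ (k - 1) * sob1 f := by
  have hνc : Continuous ν := SmoothT2.continuous hν
  have hcont : ∀ k, Continuous (u k) := fun k => SmoothT2.continuous (husmooth k)
  set M1 := ⨆ q : T2, ‖pd1 ν q‖ with hM1def
  set M2 := ⨆ q : T2, ‖pd2 ν q‖ with hM2def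
  have hM1b : ∀ q, ‖pd1 ν q‖ ≤ M1 := fun q =>
    le_ciSup ((isCompact_range (pd1_continuous hν).norm).bddAbove) q
  have hM2b : ∀ q, ‖pd2 ν q‖ ≤ M2 := fun q =>
    le_ciSup ((isCompact_range (pd2_continuous hν).norm).bddAbove) q
  have hM1n : 0 ≤ M1 := le_trans (norm_nonneg _) (hM1b (Classical.arbitrary T2))
  have hM2n : 0 ≤ M2 := le_trans (norm_nonneg _) (hM2b (Classical.arbitrary T2))
  have hS : 0 ≤ sob1 f := Real.sqrt_nonneg _
  -- the key recurrence step
  have hstep : ∀ k, Real.sqrt (l2sq (u (k + 1))) ≤ δ * Real.sqrt (l2sq (u k)) ∧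
      Real.sqrt (l2sq (pd1 (u (k + 1)))) ≤
        M1 * Real.sqrt (l2sq (u k)) + δ * Real.sqrt (l2sq (pd1 (u k))) ∧
      Real.sqrt (l2sq (pd2 (u (k + 1)))) ≤
        M2 * Real.sqrt (l2sq (u k)) + δ * Real.sqrt (l2sq (pd2 (u k))) := by
    intro k
    set φk : T2 → ℂ := fun q => ν q * u k q with hφkdef
    have hφks : SmoothT2 φk := SmoothT2.mul hν (husmooth k)
    have hφkc : Continuous φk := SmoothT2.continuous hφks
    obtain ⟨ψ, hψs, h0, h1, h2⟩ := hU φk hφks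
    have g0m : MemLp φk 2 (volume : Measure T2) := memL2 hφkc
    have e1 : ⇑(U (g0m.toLp φk)) =ᵐ[volume] u (k + 1) := hiter k _ g0m.coeFn_toLp
    have e2 : ⇑(U (g0m.toLp φk)) =ᵐ[volume] ψ := h0 _ g0m.coeFn_toLp
    have hueq : u (k + 1) = ψ :=
      (Continuous.ae_eq_iff_eq volume (hcont (k + 1)) (SmoothT2.continuous hψs)).1
        (e1.symm.trans e2)
    -- the L² norm recurrence
    have hA : Real.sqrt (l2sq (u (k + 1))) = Real.sqrt (l2sq φk) := by
      rw [sqrt_l2sq_eq_norm _ e1, LinearIsometryEquiv.norm_map,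
        ← sqrt_l2sq_eq_norm _ g0m.coeFn_toLp]
    have hAbound : Real.sqrt (l2sq φk) ≤ δ * Real.sqrt (l2sq (u k)) := by
      refine N_mono (hcont k) hδ0.le fun q => ?_
      rw [hφkdef]
      calc ‖ν q * u k q‖ = ‖ν q‖ * ‖u k q‖ := norm_mul _ _
        _ ≤ δ * ‖u k q‖ := mul_le_mul_of_nonneg_right (hνb q) (norm_nonneg _)
    refine ⟨hA ▸ hAbound, ?_, ?_⟩
    · -- pd1
      have g1c : Continuous (pd1 φk) := pd1_continuous hφks
      have g1m : MemLp (pd1 φk) 2 (volume : Measure T2) := memL2 g1c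
      have e3 : ⇑(U (g1m.toLp (pd1 φk))) =ᵐ[volume] pd1 ψ := h1 _ g1m.coeFn_toLp
      have hB : Real.sqrt (l2sq (pd1 (u (k + 1)))) = Real.sqrt (l2sq (pd1 φk)) := by
        rw [hueq, sqrt_l2sq_eq_norm _ e3, LinearIsometryEquiv.norm_map,
          ← sqrt_l2sq_eq_norm _ g1m.coeFn_toLp]
      rw [hB]
      have hleib : pd1 φk = fun q => pd1 ν q * u k q + ν q * pd1 (u k) q :=
        funext (pd1_mul hν (husmooth k))
      rw [hleib]
      calc Real.sqrt (l2sq (fun q => pd1 ν q * u k q + ν q * pd1 (u k) q))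
          ≤ Real.sqrt (l2sq (fun q => pd1 ν q * u k q)) +
            Real.sqrt (l2sq (fun q => ν q * pd1 (u k) q)) :=
            N_triangle ((pd1_continuous hν).mul (hcont k))
              (hνc.mul (pd1_continuous (husmooth k)))
        _ ≤ M1 * Real.sqrt (l2sq (u k)) + δ * Real.sqrt (l2sq (pd1 (u k))) := by
            refine add_le_add (N_mono (hcont k) hM1n fun q => ?_)
              (N_mono (pd1_continuous (husmooth k)) hδ0.le fun q => ?_)
            · calc ‖pd1 ν q * u k q‖ = ‖pd1 ν q‖ * ‖u k q‖ := norm_mul _ _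
                _ ≤ M1 * ‖u k q‖ := mul_le_mul_of_nonneg_right (hM1b q) (norm_nonneg _)
            · calc ‖ν q * pd1 (u k) q‖ = ‖ν q‖ * ‖pd1 (u k) q‖ := norm_mul _ _
                _ ≤ δ * ‖pd1 (u k) q‖ := mul_le_mul_of_nonneg_right (hνb q) (norm_nonneg _)
    · -- pd2
      have g2c : Continuous (pd2 φk) := pd2_continuous hφks
      have g2m : MemLp (pd2 φk) 2 (volume : Measure T2) := memL2 g2c
      have e3 : ⇑(U (g2m.toLp (pd2 φk))) =ᵐ[volume] pd2 ψ := h2 _ g2m.coeFn_toLp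
      have hB : Real.sqrt (l2sq (pd2 (u (k + 1)))) = Real.sqrt (l2sq (pd2 φk)) := by
        rw [hueq, sqrt_l2sq_eq_norm _ e3, LinearIsometryEquiv.norm_map,
          ← sqrt_l2sq_eq_norm _ g2m.coeFn_toLp]
      rw [hB]
      have hleib : pd2 φk = fun q => pd2 ν q * u k q + ν q * pd2 (u k) q :=
        funext (pd2_mul hν (husmooth k))
      rw [hleib]
      calc Real.sqrt (l2sq (fun q => pd2 ν q * u k q + ν q * pd2 (u k) q))
          ≤ Real.sqrt (l2sq (fun q => pd2 ν q * u k q)) +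
            Real.sqrt (l2sq (fun q => ν q * pd2 (u k) q)) :=
            N_triangle ((pd2_continuous hν).mul (hcont k))
              (hνc.mul (pd2_continuous (husmooth k)))
        _ ≤ M2 * Real.sqrt (l2sq (u k)) + δ * Real.sqrt (l2sq (pd2 (u k))) := by
            refine add_le_add (N_mono (hcont k) hM2n fun q => ?_)
              (N_mono (pd2_continuous (husmooth k)) hδ0.le fun q => ?_)
            · calc ‖pd2 ν q * u k q‖ = ‖pd2 ν q‖ * ‖u k q‖ := norm_mul _ _
                _ ≤ M2 * ‖u k q‖ := mul_le_mul_of_nonneg_right (hM2b q) (norm_nonneg _)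
            · calc ‖ν q * pd2 (u k) q‖ = ‖ν q‖ * ‖pd2 (u k) q‖ := norm_mul _ _
                _ ≤ δ * ‖pd2 (u k) q‖ := mul_le_mul_of_nonneg_right (hνb q) (norm_nonneg _)
  -- base bounds
  have hA0 : Real.sqrt (l2sq (u 0)) ≤ sob1 f := by
    rw [hu0, sob1]
    exact Real.sqrt_le_sqrt (by linarith [l2sq_nonneg (pd1 f), l2sq_nonneg (pd2 f)])
  have hB10 : Real.sqrt (l2sq (pd1 (u 0))) ≤ sob1 f := by
    rw [hu0, sob1]
    exact Real.sqrt_le_sqrt (by linarith [l2sq_nonneg f, l2sq_nonneg (pd2 f)])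
  have hB20 : Real.sqrt (l2sq (pd2 (u 0))) ≤ sob1 f := by
    rw [hu0, sob1]
    exact Real.sqrt_le_sqrt (by linarith [l2sq_nonneg f, l2sq_nonneg (pd1 f)])
  have hAk : ∀ k, Real.sqrt (l2sq (u k)) ≤ δ ^ k * sob1 f :=
    geo_bound hδ0.le _ hA0 fun k => (hstep k).1
  intro k hk
  exact ⟨rec_bound hδ0 hM1n hS _ (fun k => Real.sqrt (l2sq (pd1 (u k)))) hAk hB10 (fun k => (hstep k).2.1) k hk,
    rec_bound hδ0 hM2n hS _ (fun k => Real.sqrt (l2sq (pd2 (u k)))) hAk hB20 (fun k => (hstep k).2.2) k hk⟩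
end

section
/- (Weyl-type lemma.) Let U ⊆ ℂ be open and let Φ : U → ℂ be a continuous function that has locally L² distributional derivatives and satisfies ∂Φ/∂z̄ = 0 almost everywhere on U. Then Φ is holomorphic on U. -/
open MeasureTheory Metric Set Filter
open scoped Convolution Topology

/-- The Wirtinger derivative `∂f/∂z = (1/2)(∂f/∂x − i ∂f/∂y)` of `f` at `z`,
where `∂f/∂x`, `∂f/∂y` are the directional derivatives in directions `1`, `i`. -/
noncomputable def wderiv (f : ℂ → ℂ) (z : ℂ) : ℂ :=
  (fderiv ℝ f z 1 - Complex.I * fderiv ℝ f z Complex.I) / 2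

/-- The Wirtinger derivative `∂f/∂z̄ = (1/2)(∂f/∂x + i ∂f/∂y)` of `f` at `z`. -/
noncomputable def wderivBar (f : ℂ → ℂ) (z : ℂ) : ℂ :=
  (fderiv ℝ f z 1 + Complex.I * fderiv ℝ f z Complex.I) / 2

/-- `g` is locally square-integrable on `U`. -/
def LocallyL2On (U : Set ℂ) (g : ℂ → ℂ) : Prop :=
  ∀ K : Set ℂ, K ⊆ U → IsCompact K → IntegrableOn (fun z => ‖g z‖ ^ 2) K volume

/-- `Φ` has locally `L²` distributional derivatives `g` (in direction `1`) and `h`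
(in direction `i`) on the open set `U`: for every `C^∞` compactly supported test
function `φ` with support in `U`, `∫ Φ ∂φ/∂x = −∫ g φ` and `∫ Φ ∂φ/∂y = −∫ h φ`.
The distributional Wirtinger derivatives are then `∂Φ/∂z = (g − i h)/2` and
`∂Φ/∂z̄ = (g + i h)/2`. -/
def HasWeakDerivsOn (U : Set ℂ) (Φ g h : ℂ → ℂ) : Prop :=
  LocallyL2On U g ∧ LocallyL2On U h ∧
    ∀ φ : ℂ → ℂ, ContDiff ℝ (⊤ : ℕ∞) φ → HasCompactSupport φ → tsupport φ ⊆ U →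
      ((∫ z in U, Φ z * fderiv ℝ φ z 1 ∂volume) = -∫ z in U, g z * φ z ∂volume) ∧
      ((∫ z in U, Φ z * fderiv ℝ φ z Complex.I ∂volume) = -∫ z in U, h z * φ z ∂volume)

lemma cr_differentiableAt {F : ℂ → ℂ} {x : ℂ} {L : ℂ →L[ℝ] ℂ}
    (hF : HasFDerivAt F L x) (hCR : L Complex.I = Complex.I * L 1) :
    DifferentiableAt ℂ F x := by
  set c : ℂ := L 1 with hc
  have hLeq : ((c • (1 : ℂ →L[ℂ] ℂ)).restrictScalars ℝ) = L := by
    ext z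
    have hz : z = z.re • (1 : ℂ) + z.im • Complex.I := by
      simp [Complex.real_smul, Complex.re_add_im]
    have h1 : L z = z.re • L 1 + z.im • L Complex.I := by
      conv_lhs => rw [hz]
      rw [map_add, _root_.map_smul, _root_.map_smul]
    rw [h1, hCR, ← hc]
    simp only [ContinuousLinearMap.coe_restrictScalars',
      ContinuousLinearMap.smul_apply, ContinuousLinearMap.one_apply,
      Complex.real_smul, smul_eq_mul]
    nth_rewrite 1 [← Complex.re_add_im z]
    ring
  exact (hasFDerivAt_of_restrictScalars ℝ hF hLeq).differentiableAt

set_option maxHeartbeats 1000000 in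
/-- **Weyl-type lemma.** A continuous function on an open `U ⊆ ℂ` with locally `L²`
distributional derivatives satisfying `∂Φ/∂z̄ = 0` a.e. on `U` is holomorphic on `U`. -/
theorem weyl_lemma
    (U : Set ℂ) (hU : IsOpen U) (Φ g h : ℂ → ℂ)
    (hcont : ContinuousOn Φ U)
    (hweak : HasWeakDerivsOn U Φ g h)
    (hdbar : ∀ᵐ z ∂(volume.restrict U), (g z + Complex.I * h z) / 2 = 0) :
    DifferentiableOn ℂ Φ U := by
  obtain ⟨-, -, hw⟩ := hweak
  intro z₀ hz₀
  obtain ⟨r, hr, hball⟩ := Metric.isOpen_iff.mp hU z₀ hz₀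
  set ε : ℝ := r / 4 with hεdef
  have hε0 : 0 < ε := by positivity
  set K : Set ℂ := closedBall z₀ (3 * ε) with hKdef
  have hKU : K ⊆ U := fun t ht => hball (by
    have : dist t z₀ ≤ 3 * ε := ht
    simp only [mem_ball]
    rw [hεdef] at this; linarith)
  set Φ' : ℂ → ℂ := K.indicator Φ with hΦ'def
  have hΦK : IntegrableOn Φ K := (hcont.mono hKU).integrableOn_compact (isCompact_closedBall _ _)
  have hΦ'int : Integrable Φ' := hΦK.integrable_indicator (measurableSet_closedBall)
  have hΦ'loc : LocallyIntegrable Φ' volume := hΦ'int.locallyIntegrable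
  set L : ℂ →L[ℝ] ℝ →L[ℝ] ℂ :=
    (ContinuousLinearMap.lsmul ℝ ℝ : ℝ →L[ℝ] ℂ →L[ℝ] ℂ).flip with hLdef
  -- Key step: each mollification is complex-differentiable on the inner ball.
  have key : ∀ b : ContDiffBump (0 : ℂ), b.rOut ≤ ε → ∀ x ∈ ball z₀ (2 * ε),
      DifferentiableAt ℂ (Φ' ⋆[L] b.normed volume) x := by
    intro b hbε x hx
    set ρ : ℂ → ℝ := b.normed volume with hρdef
    have hρ1 : ContDiff ℝ 1 ρ := b.contDiff_normed
    have hd := b.hasCompactSupport_normed.hasFDerivAt_convolution_right L hΦ'loc hρ1 x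
    set L' : ℂ →L[ℝ] ℂ := (Φ' ⋆[L.precompR ℂ] fderiv ℝ ρ) x with hL'def
    have hsub : closedBall x b.rOut ⊆ K := fun t ht => by
      have h1 : dist t x ≤ b.rOut := ht
      have h2 : dist x z₀ < 2 * ε := hx
      have : dist t z₀ ≤ 3 * ε := by
        calc dist t z₀ ≤ dist t x + dist x z₀ := dist_triangle _ _ _
        _ ≤ 3 * ε := by linarith
      exact this
    have hfzero : ∀ t : ℂ, t ∉ K → fderiv ℝ ρ (x - t) = 0 := by
      intro t ht
      by_contra hne
      have hmem : x - t ∈ tsupport ρ := support_fderiv_subset ℝ (by simpa using hne)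
      rw [b.tsupport_normed_eq] at hmem
      refine ht (hsub ?_)
      have hn : ‖x - t‖ ≤ b.rOut := by
        simpa [Metric.mem_closedBall, dist_zero_right] using hmem
      rw [mem_closedBall, dist_comm, dist_eq_norm]
      exact hn
    -- the test function
    set φx : ℂ → ℂ := fun t => ((ρ (x - t) : ℝ) : ℂ) with hφxdef
    have hsubtsupp : tsupport φx ⊆ closedBall x b.rOut := by
      apply closure_minimal _ isClosed_closedBall
      intro t ht
      by_contra htB
      apply ht
      have : x - t ∉ Function.support ρ := by
        rw [b.support_normed_eq]
        intro hmem
        apply htB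
        have : dist (x - t) 0 < b.rOut := hmem
        simpa [mem_closedBall, dist_eq_norm, norm_sub_rev] using this.le
      simp [hφxdef, Function.notMem_support.mp this]
    have hφc : ContDiff ℝ (⊤ : ℕ∞) φx :=
      Complex.ofRealCLM.contDiff.comp (b.contDiff_normed.comp (contDiff_const.sub contDiff_id))
    have hφcs : HasCompactSupport φx :=
      HasCompactSupport.of_support_subset_isCompact (isCompact_closedBall x b.rOut)
        ((subset_closure).trans hsubtsupp)
    have hφU : tsupport φx ⊆ U := hsubtsupp.trans (hsub.trans hKU)
    -- derivative of test function
    have hfd : ∀ t v : ℂ, fderiv ℝ φx t v = -((fderiv ℝ ρ (x - t)) v : ℝ) := by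
      intro t v
      have h1 : HasFDerivAt (fun s : ℂ => x - s)
          (0 - ContinuousLinearMap.id ℝ ℂ) t :=
        (hasFDerivAt_const x t).sub (hasFDerivAt_id t)
      have h2 : HasFDerivAt ρ (fderiv ℝ ρ (x - t)) (x - t) :=
        ((hρ1.differentiable one_ne_zero) (x - t)).hasFDerivAt
      have h3 := Complex.ofRealCLM.hasFDerivAt.comp (x := t) (h2.comp t h1)
      have h4 : HasFDerivAt φx
          (Complex.ofRealCLM.comp ((fderiv ℝ ρ (x - t)).comp
            (0 - ContinuousLinearMap.id ℝ ℂ))) t := h3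
      rw [h4.fderiv]
      simp
    -- L' applied to a direction
    have comp : ∀ v : ℂ, L' v = -∫ z in U, Φ z * fderiv ℝ φx z v ∂volume := by
      intro v
      have e1 : L' v = (Φ' ⋆[L] fun a => fderiv ℝ ρ a v) x :=
        convolution_precompR_apply L hΦ'loc (b.hasCompactSupport_normed.fderiv (𝕜 := ℝ))
          (hρ1.continuous_fderiv one_ne_zero) x v
      have e2 : (Φ' ⋆[L] fun a => fderiv ℝ ρ a v) x
          = ∫ t : ℂ, (fderiv ℝ ρ (x - t) v) • Φ' t ∂volume := by
        rw [convolution_def]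
        simp [hLdef]
      have e3 : (∫ t : ℂ, (fderiv ℝ ρ (x - t) v) • Φ' t ∂volume)
          = ∫ t in U, (fderiv ℝ ρ (x - t) v) • Φ' t ∂volume := by
        refine (setIntegral_eq_integral_of_forall_compl_eq_zero fun t ht => ?_).symm
        have : Φ' t = 0 := indicator_of_notMem (fun hK => ht (hKU hK)) Φ
        simp [this]
      have e4 : (∫ t in U, (fderiv ℝ ρ (x - t) v) • Φ' t ∂volume)
          = ∫ t in U, -(Φ t * fderiv ℝ φx t v) ∂volume := by
        refine setIntegral_congr_fun hU.measurableSet fun t ht => ?_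
        rw [hfd t v]
        by_cases htK : t ∈ K
        · rw [hΦ'def, indicator_of_mem htK]
          rw [Complex.real_smul]
          ring
        · rw [hfzero t htK, hΦ'def, indicator_of_notMem htK]
          simp
      rw [e1, e2, e3, e4, integral_neg]
    have hL1 : L' 1 = ∫ z in U, g z * φx z ∂volume := by
      rw [comp 1, (hw φx hφc hφcs hφU).1, neg_neg]
    have hLI : L' Complex.I = ∫ z in U, h z * φx z ∂volume := by
      rw [comp Complex.I, (hw φx hφc hφcs hφU).2, neg_neg]
    have hCR : L' Complex.I = Complex.I * L' 1 := by
      rw [hL1, hLI, ← integral_const_mul]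
      refine integral_congr_ae (hdbar.mono fun z hz => ?_)
      have hz' : g z + Complex.I * h z = 0 := by
        field_simp at hz
        simpa using hz
      have hgh : h z = Complex.I * g z := by
        linear_combination (-Complex.I) * hz' + h z * Complex.I_sq
      dsimp only
      rw [hgh]; ring
    exact cr_differentiableAt hd hCR
  -- The mollifier sequence
  have hnpos : ∀ n : ℕ, (0 : ℝ) < (n : ℝ) + 1 := fun n => by positivity
  set bump : ℕ → ContDiffBump (0 : ℂ) := fun n =>
    ⟨ε / (2 * ((n : ℝ) + 1)), ε / ((n : ℝ) + 1), by positivity, by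
      apply div_lt_div_of_pos_left hε0 (hnpos n)
      nlinarith [hnpos n]⟩ with hbumpdef
  set Fn : ℕ → ℂ → ℂ := fun n => Φ' ⋆[L] (bump n).normed volume with hFndef
  have hrOut : ∀ n : ℕ, (bump n).rOut = ε / ((n : ℝ) + 1) := fun n => rfl
  have hrOutε : ∀ n : ℕ, (bump n).rOut ≤ ε := fun n => by
    rw [hrOut]
    apply div_le_self hε0.le
    have := hnpos n; linarith [Nat.cast_nonneg (α := ℝ) n]
  have hFdiff : ∀ n, DifferentiableOn ℂ (Fn n) (ball z₀ (2 * ε)) := fun n x hx =>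
    (key (bump n) (hrOutε n) x hx).differentiableWithinAt
  have hflip : ∀ n, Fn n = (bump n).normed volume ⋆[ContinuousLinearMap.lsmul ℝ ℝ] Φ' :=
    fun n => convolution_flip (ContinuousLinearMap.lsmul ℝ ℝ)
  -- uniform convergence
  have htlu : TendstoLocallyUniformlyOn Fn Φ atTop (ball z₀ (2 * ε)) := by
    rw [tendstoLocallyUniformlyOn_iff_forall_isCompact isOpen_ball]
    intro K' hK' hK'c
    rw [Metric.tendstoUniformlyOn_iff]
    intro η hη
    have hUC := (isCompact_closedBall z₀ (3 * ε)).uniformContinuousOn_of_continuous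
      (hcont.mono hKU)
    rw [Metric.uniformContinuousOn_iff] at hUC
    obtain ⟨δ, hδ0, hδ⟩ := hUC (η / 2) (by positivity)
    obtain ⟨N, hN⟩ := exists_nat_gt (ε / δ)
    filter_upwards [eventually_ge_atTop N] with n hn x hxK'
    have hx2 : x ∈ ball z₀ (2 * ε) := hK' hxK'
    have hxK : x ∈ K := by
      have : dist x z₀ < 2 * ε := hx2
      show dist x z₀ ≤ 3 * ε
      linarith
    have hΦ'x : Φ' x = Φ x := indicator_of_mem hxK Φ
    have hout : (bump n).rOut < δ := by
      rw [hrOut]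
      rw [div_lt_iff₀ (hnpos n)]
      have h1 : ε / δ < (n : ℝ) + 1 := by
        have : (N : ℝ) ≤ (n : ℝ) := Nat.cast_le.mpr hn
        linarith
      calc ε = (ε / δ) * δ := by field_simp
      _ < ((n : ℝ) + 1) * δ := by
        apply mul_lt_mul_of_pos_right h1 hδ0
      _ = δ * ((n : ℝ) + 1) := by ring
    have hbound : dist (Fn n x) (Φ' x) ≤ η / 2 := by
      rw [hflip n]
      refine ContDiffBump.dist_normed_convolution_le hΦ'int.aestronglyMeasurable ?_
      intro y hy
      have hyx : dist y x < (bump n).rOut := by simpa [dist_eq_norm] using hy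
      have hyK : y ∈ K := by
        have : dist y z₀ ≤ dist y x + dist x z₀ := dist_triangle _ _ _
        have h2 : dist x z₀ < 2 * ε := hx2
        have h3 : (bump n).rOut ≤ ε := hrOutε n
        show dist y z₀ ≤ 3 * ε
        linarith
      rw [hΦ'def, indicator_of_mem hyK Φ, indicator_of_mem hxK Φ]
      exact (hδ y hyK x hxK (by linarith)).le
    rw [hΦ'x] at hbound
    calc dist (Φ x) (Fn n x) = dist (Fn n x) (Φ x) := dist_comm _ _
    _ ≤ η / 2 := hbound
    _ < η := by linarith
  have hdiff := htlu.differentiableOn (Eventually.of_forall hFdiff) isOpen_ball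
  have hz₀mem : z₀ ∈ ball z₀ (2 * ε) := mem_ball_self (by positivity)
  exact ((hdiff z₀ hz₀mem).differentiableAt (isOpen_ball.mem_nhds hz₀mem)).differentiableWithinAt
end
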